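/- (Esakia's Lemma for ◇⁻¹) Let F = (W, R, 𝕎) be a descriptive general frame. Then for any downwards directed family {C_i : i ∈ I} of nonempty closed sets in the topology generated by 𝕎, ◇⁻¹(⋂_{i∈I} C_i) = ⋂_{i∈I} ◇⁻¹C_i, where ◇⁻¹A = {w : ∃v (Rvw ∧ v ∈ A)} = R(A), the set of R-successors of points in A. -/

import Mathlib

/-- The diamond set operator: `◇A = {w : ∃v, R w v ∧ v ∈ A}`. -/
def diaOp {W : Type} (R : W → W → Prop) (A : Set W) : Set W := {w | ∃ v, R w v ∧ v ∈ A}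

/-- The box set operator: `□A = {w : ∀v, R w v → v ∈ A}`. -/
def boxOp {W : Type} (R : W → W → Prop) (A : Set W) : Set W := {w | ∀ v, R w v → v ∈ A}

/-- The inverse diamond set operator: `◇⁻¹A = {w : ∃v ∈ A, R v w} = R(A)`. -/
def idiaOp {W : Type} (R : W → W → Prop) (A : Set W) : Set W := {w | ∃ v, R v w ∧ v ∈ A}

/-- The inverse box set operator: `□⁻¹A = {w : ∀v, R v w → v ∈ A}`. -/
def iboxOp {W : Type} (R : W → W → Prop) (A : Set W) : Set W := {w | ∀ v, R v w → v ∈ A}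
/-- A general frame: a Kripke frame together with a Boolean algebra of
admissible subsets closed under the diamond operator. -/
structure GenFrame (W : Type) where
  R : W → W → Prop
  adm : Set (Set W)
  univ_mem : Set.univ ∈ adm
  compl_mem : ∀ X ∈ adm, Xᶜ ∈ adm
  inter_mem : ∀ X ∈ adm, ∀ Y ∈ adm, X ∩ Y ∈ adm
  dia_mem : ∀ X ∈ adm, diaOp R X ∈ adm

/-- The topology generated by the admissible sets as a base of clopen sets. -/
def GenFrame.top {W : Type} (F : GenFrame W) : TopologicalSpace W :=
  TopologicalSpace.generateFrom F.adm

/-- Differentiated: distinct points are separated by admissible sets. -/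
def GenFrame.differentiated {W : Type} (F : GenFrame W) : Prop :=
  ∀ x y : W, x ≠ y → ∃ X ∈ F.adm, x ∈ X ∧ y ∉ X

/-- Tight: `R x y` iff `x ∈ ◇Y` for every admissible `Y` containing `y`. -/
def GenFrame.tight {W : Type} (F : GenFrame W) : Prop :=
  ∀ x y : W, F.R x y ↔ ∀ Y ∈ F.adm, y ∈ Y → x ∈ diaOp F.R Y

/-- Compact: every family of admissible sets with the finite intersection
property has nonempty intersection. -/
def GenFrame.cpt {W : Type} (F : GenFrame W) : Prop :=
  ∀ C : Set (Set W), C ⊆ F.adm →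
    (∀ D : Set (Set W), D ⊆ C → D.Finite → (⋂₀ D).Nonempty) →
    (⋂₀ C).Nonempty

/-- A descriptive frame is a differentiated, tight and compact general frame. -/
def GenFrame.descriptive {W : Type} (F : GenFrame W) : Prop :=
  F.differentiated ∧ F.tight ∧ F.cpt

/-- Esakia's Lemma for `◇⁻¹`: in a descriptive frame, `◇⁻¹` commutes with
intersections of downwards directed families of nonempty closed sets. -/
theorem esakia_idia {W : Type} (F : GenFrame W) (hF : F.descriptive)
    {I : Type} [Nonempty I] (C : I → Set W)
    (hclosed : ∀ i, @IsClosed W F.top (C i))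
    (hne : ∀ i, (C i).Nonempty)
    (hdir : ∀ i j, ∃ k, C k ⊆ C i ∩ C j) :
    idiaOp F.R (⋂ i, C i) = ⋂ i, idiaOp F.R (C i) := by
  obtain ⟨_, htight, hcpt⟩ := hF
  apply Set.Subset.antisymm
  · intro w hw
    obtain ⟨v, hvw, hv⟩ := hw
    exact Set.mem_iInter.2 fun i => ⟨v, hvw, Set.mem_iInter.1 hv i⟩
  · intro w hw
    have hw' : ∀ i, ∃ v, F.R v w ∧ v ∈ C i := fun i => Set.mem_iInter.1 hw i
    set 𝒞 : Set (Set W) :=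
      {X | X ∈ F.adm ∧ ((∃ i, C i ⊆ X) ∨ ∃ Y ∈ F.adm, w ∈ Y ∧ X = diaOp F.R Y)} with h𝒞
    have hsub : 𝒞 ⊆ F.adm := fun X hX => hX.1
    have aux : ∀ D : Set (Set W), D.Finite → (∀ X ∈ D, ∃ i, C i ⊆ X) →
        ∃ k, ∀ X ∈ D, C k ⊆ X := by
      intro D hDfin
      refine Set.Finite.induction_on (motive := fun D _ => (∀ X ∈ D, ∃ i, C i ⊆ X) →
          ∃ k, ∀ X ∈ D, C k ⊆ X) D hDfin
        (fun _ => ⟨Classical.arbitrary I, fun X hX => absurd hX (Set.notMem_empty X)⟩)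
        (@fun X D hX hDfin ih => ?_)
      · intro hall
        obtain ⟨k, hk⟩ := ih (fun Y hY => hall Y (Set.mem_insert_of_mem X hY))
        obtain ⟨i, hi⟩ := hall X (Set.mem_insert X D)
        obtain ⟨m, hm⟩ := hdir i k
        refine ⟨m, fun Y hY => ?_⟩
        rcases Set.mem_insert_iff.1 hY with rfl | hY
        · exact fun x hx => hi ((hm hx).1)
        · exact fun x hx => hk Y hY ((hm hx).2)
    have hFIP : ∀ D : Set (Set W), D ⊆ 𝒞 → D.Finite → (⋂₀ D).Nonempty := by
      intro D hD hDfin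
      obtain ⟨k, hk⟩ := aux {X ∈ D | ∃ i, C i ⊆ X}
        (hDfin.subset (Set.sep_subset _ _)) (fun X hX => hX.2)
      obtain ⟨v, hvw, hvk⟩ := hw' k
      refine ⟨v, fun X hXD => ?_⟩
      rcases (hD hXD).2 with hcase | ⟨Y, hY, hwY, rfl⟩
      · exact hk X ⟨hXD, hcase⟩ hvk
      · exact (htight v w).1 hvw Y hY hwY
    obtain ⟨z, hz⟩ := hcpt 𝒞 hsub hFIP
    have basis : ∀ U : Set W, TopologicalSpace.GenerateOpen F.adm U →
        ∀ x ∈ U, ∃ X ∈ F.adm, x ∈ X ∧ X ⊆ U := by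
      intro U hU
      induction hU with
      | basic X hX => exact fun x hx => ⟨X, hX, hx, Set.Subset.refl X⟩
      | univ => exact fun x _ => ⟨Set.univ, F.univ_mem, trivial, Set.Subset.refl _⟩
      | inter U V hU hV ihU ihV =>
        intro x hx
        obtain ⟨X, hX, hxX, hXU⟩ := ihU x hx.1
        obtain ⟨Y, hY, hxY, hYV⟩ := ihV x hx.2
        exact ⟨X ∩ Y, F.inter_mem X hX Y hY, ⟨hxX, hxY⟩, fun y hy => ⟨hXU hy.1, hYV hy.2⟩⟩
      | sUnion S hS ih =>
        intro x hx
        obtain ⟨U, hUS, hxU⟩ := hx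
        obtain ⟨X, hX, hxX, hXU⟩ := ih U hUS x hxU
        exact ⟨X, hX, hxX, hXU.trans (Set.subset_sUnion_of_mem hUS)⟩
    have hzC : ∀ i, z ∈ C i := by
      intro i
      by_contra hzi
      obtain ⟨X, hX, hzX, hXsub⟩ := basis (C i)ᶜ (hclosed i).isOpen_compl z hzi
      have hmem : Xᶜ ∈ 𝒞 :=
        ⟨F.compl_mem X hX, Or.inl ⟨i, fun y hy hyX => hXsub hyX hy⟩⟩
      exact hz Xᶜ hmem hzX
    have hRzw : F.R z w := by
      apply (htight z w).2
      intro Y hY hwY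
      exact hz (diaOp F.R Y) ⟨F.dia_mem Y hY, Or.inr ⟨Y, hY, hwY, rfl⟩⟩
    exact ⟨z, hRzw, Set.mem_iInter.2 hzC⟩
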